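/- Let p be a prime and let r be a topological generator of U_1. Then there is a unique continuous group homomorphism φ_r from the multiplicative topological group ℤ_p^× to the additive topological group ℤ_p with φ_r(r) = 1; moreover, every continuous group homomorphism ψ : ℤ_p^× → ℤ_p is of the form ψ = a·φ_r for a unique a ∈ ℤ_p. In other words, the group of continuous homomorphisms from ℤ_p^× to (ℤ_p, +) is a free ℤ_p-module of rank 1 generated by φ_r. -/

import Mathlib

/-- For a prime `p`, the subgroup `U₁` of `ℤ_[p]ˣ` of units congruent to `1` modulo `p`
(if `p` is odd) or modulo `4` (if `p = 2`), defined as the kernel of the reduction map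
`ℤ_[p]ˣ → (ZMod (p ^ k))ˣ` with `k = 2` if `p = 2` and `k = 1` otherwise. -/
noncomputable def U1 (p : ℕ) [Fact p.Prime] : Subgroup ℤ_[p]ˣ :=
  (Units.map ((PadicInt.toZModPow (if p = 2 then 2 else 1) :
    ℤ_[p] →+* ZMod (p ^ (if p = 2 then 2 else 1))) :
    ℤ_[p] →* ZMod (p ^ (if p = 2 then 2 else 1)))).ker

namespace Stmt9Aux
open PadicInt Filter Finset

variable {p : ℕ} [hp : Fact p.Prime]

lemma dvd_iff_norm (n : ℕ) (x : ℤ_[p]) :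
    (p : ℤ_[p]) ^ n ∣ x ↔ ‖x‖ ≤ (p : ℝ) ^ (-n : ℤ) := by
  rw [norm_le_pow_iff_mem_span_pow, Ideal.mem_span_singleton]

/-- The subgroup of units congruent to 1 mod `p^n`. -/
def Sub (p : ℕ) [Fact p.Prime] (n : ℕ) : Subgroup ℤ_[p]ˣ where
  carrier := {x | (p : ℤ_[p]) ^ n ∣ ((x : ℤ_[p]) - 1)}
  one_mem' := by simp
  mul_mem' := by
    rintro a b ha hb
    have : ((a * b : ℤ_[p]ˣ) : ℤ_[p]) - 1 = ((a : ℤ_[p]) - 1) * b + ((b : ℤ_[p]) - 1) := by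
      push_cast; ring
    rw [Set.mem_setOf_eq, this]
    exact dvd_add (ha.mul_right _) hb
  inv_mem' := by
    intro a ha
    have : ((a⁻¹ : ℤ_[p]ˣ) : ℤ_[p]) - 1 = -(↑a⁻¹ : ℤ_[p]) * ((a : ℤ_[p]) - 1) := by
      have h1 : (↑a⁻¹ : ℤ_[p]) * (a : ℤ_[p]) = 1 := by
        rw [← Units.val_mul, inv_mul_cancel, Units.val_one]
      linear_combination h1
    rw [Set.mem_setOf_eq, this]
    exact ha.mul_left _

lemma mem_Sub_iff {n : ℕ} {x : ℤ_[p]ˣ} :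
    x ∈ Sub p n ↔ (p : ℤ_[p]) ^ n ∣ ((x : ℤ_[p]) - 1) := Iff.rfl

lemma Sub_anti {m n : ℕ} (h : m ≤ n) : Sub p n ≤ Sub p m := fun x hx =>
  dvd_trans (pow_dvd_pow _ h) hx

lemma pow_mem_Sub_succ {n : ℕ} (hn : 1 ≤ n) {x : ℤ_[p]ˣ} (hx : x ∈ Sub p n) :
    x ^ p ∈ Sub p (n + 1) := by
  rw [mem_Sub_iff] at hx ⊢
  have hcoe : ((x ^ p : ℤ_[p]ˣ) : ℤ_[p]) = (x : ℤ_[p]) ^ p := by push_cast; ring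
  rw [hcoe, ← mul_geom_sum]
  have hdvd1 : (p : ℤ_[p]) ∣ ((x : ℤ_[p]) - 1) :=
    dvd_trans (by simpa using pow_dvd_pow (p : ℤ_[p]) hn) hx
  have hsum : (p : ℤ_[p]) ∣ ∑ i ∈ range p, (x : ℤ_[p]) ^ i := by
    have h1 : ∀ i ∈ range p, (p : ℤ_[p]) ∣ ((x : ℤ_[p]) ^ i - 1) := fun i _ =>
      dvd_trans hdvd1 (by simpa using sub_dvd_pow_sub_pow (x : ℤ_[p]) 1 i)
    have h2 : (∑ i ∈ range p, (x : ℤ_[p]) ^ i) =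
        (∑ i ∈ range p, ((x : ℤ_[p]) ^ i - 1)) + p := by
      rw [Finset.sum_sub_distrib]
      simp
    rw [h2]
    exact dvd_add (Finset.dvd_sum h1) dvd_rfl
  calc (p : ℤ_[p]) ^ (n + 1) = (p : ℤ_[p]) ^ n * p := by ring
  _ ∣ ((x : ℤ_[p]) - 1) * ∑ i ∈ range p, (x : ℤ_[p]) ^ i := mul_dvd_mul hx hsum

lemma pow_pow_mem {x : ℤ_[p]ˣ} (hx : x ∈ Sub p 1) (n : ℕ) :
    x ^ (p ^ n) ∈ Sub p (n + 1) := by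
  induction n with
  | zero => simpa using hx
  | succ n ih =>
    have : x ^ (p ^ (n + 1)) = (x ^ (p ^ n)) ^ p := by rw [← pow_mul, pow_succ]
    rw [this]
    exact pow_mem_Sub_succ (Nat.le_add_left 1 n) ih

lemma zpow_mem_of_dvd {x : ℤ_[p]ˣ} (hx : x ∈ Sub p 1) {n : ℕ} {z : ℤ}
    (hz : (p : ℤ) ^ n ∣ z) : x ^ z ∈ Sub p (n + 1) := by
  obtain ⟨t, rfl⟩ := hz
  have : x ^ ((p : ℤ) ^ n * t) = (x ^ (p ^ n : ℕ)) ^ t := by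
    rw [← zpow_natCast, ← zpow_mul]; push_cast; ring_nf
  rw [this]
  exact Subgroup.zpow_mem _ (pow_pow_mem hx n) t

lemma mem_iff_dist {x y : ℤ_[p]ˣ} {n : ℕ} :
    x * y⁻¹ ∈ Sub p n ↔ ‖(x : ℤ_[p]) - y‖ ≤ (p : ℝ) ^ (-n : ℤ) := by
  rw [mem_Sub_iff, ← dvd_iff_norm]
  constructor
  · intro h
    have key : (x : ℤ_[p]) - y = (y : ℤ_[p]) * (((x * y⁻¹ : ℤ_[p]ˣ) : ℤ_[p]) - 1) := by
      push_cast
      rw [mul_sub, mul_left_comm, Units.mul_inv]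
      ring
    rw [key]
    exact h.mul_left _
  · intro h
    have key : ((x * y⁻¹ : ℤ_[p]ˣ) : ℤ_[p]) - 1 = ((y⁻¹ : ℤ_[p]ˣ) : ℤ_[p]) * ((x : ℤ_[p]) - y) := by
      push_cast
      linear_combination (Units.inv_mul y)
    rw [key]
    exact h.mul_left _

lemma mem_iff_dist_one {x : ℤ_[p]ˣ} {n : ℕ} :
    x ∈ Sub p n ↔ ‖(x : ℤ_[p]) - 1‖ ≤ (p : ℝ) ^ (-n : ℤ) := by
  simpa using mem_iff_dist (x := x) (y := 1) (n := n)

lemma appr_sub_appr_dvd (a : ℤ_[p]) {n m : ℕ} (h : n ≤ m) :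
    (p : ℤ) ^ n ∣ (a.appr m : ℤ) - (a.appr n : ℤ) := by
  rw [← pow_p_dvd_int_iff]
  have h1 : (p : ℤ_[p]) ^ n ∣ a - a.appr n := Ideal.mem_span_singleton.mp (appr_spec n a)
  have h2 : (p : ℤ_[p]) ^ n ∣ a - a.appr m :=
    dvd_trans (pow_dvd_pow _ h) (Ideal.mem_span_singleton.mp (appr_spec m a))
  have : (((a.appr m : ℤ) - (a.appr n : ℤ) : ℤ) : ℤ_[p]) = (a - a.appr n) - (a - a.appr m) := by
    push_cast; ring
  rw [this]
  exact dvd_sub h1 h2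

/-- The approximating sequence for `u ^ a`. -/
noncomputable def sq (u : ℤ_[p]ˣ) (a : ℤ_[p]) (n : ℕ) : ℤ_[p]ˣ := u ^ (a.appr n : ℤ)

lemma sq_close {u : ℤ_[p]ˣ} (hu : u ∈ Sub p 1) (a : ℤ_[p]) {n m : ℕ} (h : n ≤ m) :
    sq u a m * (sq u a n)⁻¹ ∈ Sub p (n + 1) := by
  have : sq u a m * (sq u a n)⁻¹ = u ^ ((a.appr m : ℤ) - (a.appr n : ℤ)) := by
    rw [zpow_sub]; rfl
  rw [this]
  exact zpow_mem_of_dvd hu (appr_sub_appr_dvd a h)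

lemma norm_sq_sub {u : ℤ_[p]ˣ} (hu : u ∈ Sub p 1) (a : ℤ_[p]) {n m : ℕ} (h : n ≤ m) :
    ‖((sq u a m : ℤ_[p]ˣ) : ℤ_[p]) - ((sq u a n : ℤ_[p]ˣ) : ℤ_[p])‖ ≤ (p : ℝ) ^ (-(n + 1) : ℤ) := by
  exact mem_iff_dist.mp (sq_close hu a h)

lemma tendsto_pow_neg : Tendsto (fun n : ℕ => (p : ℝ) ^ (-(n + 1) : ℤ)) atTop (nhds 0) := by
  have hp1 : (1 : ℝ) < p := by exact_mod_cast hp.out.one_lt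
  have h0 : Tendsto (fun n : ℕ => ((p : ℝ)⁻¹) ^ n * (p : ℝ)⁻¹) atTop (nhds 0) := by
    have := tendsto_pow_atTop_nhds_zero_of_lt_one (by positivity : (0:ℝ) ≤ (p : ℝ)⁻¹)
      (by rw [inv_lt_one_iff₀]; right; exact hp1)
    simpa using this.mul_const ((p : ℝ)⁻¹)
  convert h0 using 2 with n
  rw [show (-(↑n + 1) : ℤ) = (-n) + (-1) by ring,
    zpow_add₀ (by positivity : (p:ℝ) ≠ 0), zpow_neg, zpow_natCast, zpow_neg_one, inv_pow]

lemma cauchy_sq {u : ℤ_[p]ˣ} (hu : u ∈ Sub p 1) (a : ℤ_[p]) :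
    CauchySeq (fun n => ((sq u a n : ℤ_[p]ˣ) : ℤ_[p])) := by
  apply cauchySeq_of_le_tendsto_0 (fun n : ℕ => (p : ℝ) ^ (-(n + 1) : ℤ)) _ tendsto_pow_neg
  intro n m N hn hm
  rcases le_total n m with h | h
  · rw [dist_comm, dist_eq_norm]
    calc ‖((sq u a m : ℤ_[p]ˣ) : ℤ_[p]) - ((sq u a n : ℤ_[p]ˣ) : ℤ_[p])‖
        ≤ (p : ℝ) ^ (-(n + 1) : ℤ) := norm_sq_sub hu a h
      _ ≤ (p : ℝ) ^ (-(N + 1) : ℤ) := by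
          apply zpow_le_zpow_right₀ (by exact_mod_cast hp.out.one_le)
          omega
  · rw [dist_eq_norm]
    calc ‖((sq u a n : ℤ_[p]ˣ) : ℤ_[p]) - ((sq u a m : ℤ_[p]ˣ) : ℤ_[p])‖
        ≤ (p : ℝ) ^ (-(m + 1) : ℤ) := norm_sq_sub hu a h
      _ ≤ (p : ℝ) ^ (-(N + 1) : ℤ) := by
          apply zpow_le_zpow_right₀ (by exact_mod_cast hp.out.one_le)
          omega

noncomputable def rhoVal (u : ℤ_[p]ˣ) (a : ℤ_[p]) : ℤ_[p] :=
  limUnder atTop (fun n => ((sq u a n : ℤ_[p]ˣ) : ℤ_[p]))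

lemma tendsto_rhoVal {u : ℤ_[p]ˣ} (hu : u ∈ Sub p 1) (a : ℤ_[p]) :
    Tendsto (fun n => ((sq u a n : ℤ_[p]ˣ) : ℤ_[p])) atTop (nhds (rhoVal u a)) :=
  (cauchy_sq hu a).tendsto_limUnder

lemma sq_inv (u : ℤ_[p]ˣ) (a : ℤ_[p]) (n : ℕ) : sq u⁻¹ a n = (sq u a n)⁻¹ := by
  rw [sq, sq, inv_zpow]

lemma rhoVal_mul_inv {u : ℤ_[p]ˣ} (hu : u ∈ Sub p 1) (a : ℤ_[p]) :
    rhoVal u a * rhoVal u⁻¹ a = 1 := by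
  have hu' : u⁻¹ ∈ Sub p 1 := (Sub p 1).inv_mem hu
  have h1 := (tendsto_rhoVal hu a).mul (tendsto_rhoVal hu' a)
  have h2 : (fun n => ((sq u a n : ℤ_[p]ˣ) : ℤ_[p]) * ((sq u⁻¹ a n : ℤ_[p]ˣ) : ℤ_[p]))
      = fun _ => (1 : ℤ_[p]) := by
    funext n
    rw [sq_inv, ← Units.val_mul, mul_inv_cancel, Units.val_one]
  rw [h2] at h1
  exact (tendsto_nhds_unique tendsto_const_nhds h1).symm

/-- The continuous extension `a ↦ u ^ a` as a unit. -/
noncomputable def rho {u : ℤ_[p]ˣ} (hu : u ∈ Sub p 1) (a : ℤ_[p]) : ℤ_[p]ˣ :=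
  Units.mkOfMulEqOne (rhoVal u a) (rhoVal u⁻¹ a) (rhoVal_mul_inv hu a)

@[simp] lemma rho_val {u : ℤ_[p]ˣ} (hu : u ∈ Sub p 1) (a : ℤ_[p]) :
    ((rho hu a : ℤ_[p]ˣ) : ℤ_[p]) = rhoVal u a := rfl

lemma rho_dist {u : ℤ_[p]ˣ} (hu : u ∈ Sub p 1) (a : ℤ_[p]) (n : ℕ) (z : ℤ)
    (h : (p : ℤ_[p]) ^ n ∣ (a - (z : ℤ_[p]))) : rho hu a * (u ^ z)⁻¹ ∈ Sub p (n + 1) := by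
  rw [mem_iff_dist]
  have key : ∀ m : ℕ, n ≤ m →
      ‖((sq u a m : ℤ_[p]ˣ) : ℤ_[p]) - ((u ^ z : ℤ_[p]ˣ) : ℤ_[p])‖ ≤ (p : ℝ) ^ (-(n+1) : ℤ) := by
    intro m hm
    have hdvd : (p : ℤ) ^ n ∣ (a.appr m : ℤ) - z := by
      rw [← pow_p_dvd_int_iff]
      have h1 : (p : ℤ_[p]) ^ n ∣ a - a.appr m :=
        dvd_trans (pow_dvd_pow _ hm) (Ideal.mem_span_singleton.mp (appr_spec m a))
      have : (((a.appr m : ℤ) - z : ℤ) : ℤ_[p]) = (a - (z:ℤ_[p])) - (a - a.appr m) := by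
        push_cast; ring
      rw [this]
      exact dvd_sub h h1
    have : sq u a m * (u ^ z)⁻¹ = u ^ ((a.appr m : ℤ) - z) := by rw [zpow_sub]; rfl
    have hmem : sq u a m * (u ^ z)⁻¹ ∈ Sub p (n + 1) := by
      rw [this]; exact zpow_mem_of_dvd hu hdvd
    exact mem_iff_dist.mp hmem
  have htend : Tendsto (fun m => ‖((sq u a m : ℤ_[p]ˣ) : ℤ_[p]) - ((u ^ z : ℤ_[p]ˣ) : ℤ_[p])‖)
      atTop (nhds ‖rhoVal u a - ((u ^ z : ℤ_[p]ˣ) : ℤ_[p])‖) :=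
    ((tendsto_rhoVal hu a).sub tendsto_const_nhds).norm
  exact le_of_tendsto htend (Filter.eventually_atTop.mpr ⟨n, key⟩)

lemma eq_zero_of_forall_dvd {w : ℤ_[p]} (h : ∀ n : ℕ, (p : ℤ_[p]) ^ n ∣ w) : w = 0 := by
  rw [← norm_le_zero_iff]
  have h1 : ∀ n : ℕ, ‖w‖ ≤ (p : ℝ) ^ (-(n+1) : ℤ) := by
    intro n
    have h2 := (dvd_iff_norm (n+1) w).mp (h (n+1))
    have e : ((-(↑(n+1) : ℤ)) : ℤ) = (-(↑n+1) : ℤ) := by push_cast; ring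
    rw [e] at h2
    exact h2
  exact le_of_tendsto_of_tendsto' tendsto_const_nhds tendsto_pow_neg h1

lemma eq_one_of_forall_mem {x : ℤ_[p]ˣ} (h : ∀ n : ℕ, x ∈ Sub p n) : x = 1 := by
  have : ((x : ℤ_[p]ˣ) : ℤ_[p]) - 1 = 0 := eq_zero_of_forall_dvd (fun n => h n)
  ext
  rw [sub_eq_zero] at this
  simpa using this

lemma rho_int {u : ℤ_[p]ˣ} (hu : u ∈ Sub p 1) (z : ℤ) : rho hu (z : ℤ_[p]) = u ^ z := by
  have h : ∀ n : ℕ, rho hu (z : ℤ_[p]) * (u ^ z)⁻¹ ∈ Sub p n := by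
    intro n
    have hz : (p:ℤ_[p])^n ∣ ((z:ℤ_[p]) - ((z:ℤ):ℤ_[p])) := by rw [sub_self]; exact dvd_zero _
    have := rho_dist hu (z : ℤ_[p]) n z hz
    exact Sub_anti (Nat.le_succ n) this
  have := eq_one_of_forall_mem h
  rwa [mul_inv_eq_one] at this

lemma rho_add {u : ℤ_[p]ˣ} (hu : u ∈ Sub p 1) (a b : ℤ_[p]) :
    rho hu (a + b) = rho hu a * rho hu b := by
  ext
  have h1 : Tendsto (fun n => ((sq u a n : ℤ_[p]ˣ) : ℤ_[p]) * ((sq u b n : ℤ_[p]ˣ) : ℤ_[p]))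
      atTop (nhds (rhoVal u a * rhoVal u b)) :=
    (tendsto_rhoVal hu a).mul (tendsto_rhoVal hu b)
  have h2 : Tendsto (fun n => ((sq u (a+b) n : ℤ_[p]ˣ) : ℤ_[p])
        - ((sq u a n : ℤ_[p]ˣ) : ℤ_[p]) * ((sq u b n : ℤ_[p]ˣ) : ℤ_[p]))
      atTop (nhds 0) := by
    apply squeeze_zero_norm _ (tendsto_pow_neg (p := p))
    intro n
    have hdvd : (p : ℤ) ^ n ∣ ((a+b).appr n : ℤ) - ((a.appr n : ℤ) + (b.appr n : ℤ)) := by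
      rw [← pow_p_dvd_int_iff]
      have k1 : (p : ℤ_[p]) ^ n ∣ (a+b) - (a+b).appr n := Ideal.mem_span_singleton.mp (appr_spec n _)
      have k2 : (p : ℤ_[p]) ^ n ∣ a - a.appr n := Ideal.mem_span_singleton.mp (appr_spec n a)
      have k3 : (p : ℤ_[p]) ^ n ∣ b - b.appr n := Ideal.mem_span_singleton.mp (appr_spec n b)
      have : ((((a+b).appr n : ℤ) - ((a.appr n : ℤ) + (b.appr n : ℤ)) : ℤ) : ℤ_[p])
          = (a - a.appr n) + (b - b.appr n) - ((a+b) - (a+b).appr n) := by push_cast; ring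
      rw [this]
      exact dvd_sub (dvd_add k2 k3) k1
    have hmem : sq u (a+b) n * (sq u a n * sq u b n)⁻¹ ∈ Sub p (n+1) := by
      have : sq u (a+b) n * (sq u a n * sq u b n)⁻¹
          = u ^ (((a+b).appr n : ℤ) - ((a.appr n : ℤ) + (b.appr n : ℤ))) := by
        rw [sq, sq, sq, ← zpow_add, ← zpow_sub]
      rw [this]
      exact zpow_mem_of_dvd hu hdvd
    have := mem_iff_dist.mp hmem
    simpa using this
  have h3 : Tendsto (fun n => ((sq u (a+b) n : ℤ_[p]ˣ) : ℤ_[p]))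
      atTop (nhds (rhoVal u a * rhoVal u b)) := by
    have := h1.add h2
    simpa using this
  have h4 := tendsto_nhds_unique (tendsto_rhoVal hu (a+b)) h3
  simpa using h4

lemma rho_mem {u : ℤ_[p]ˣ} (hu : u ∈ Sub p 1) {k : ℕ} (huk : u ∈ Sub p k) (a : ℤ_[p]) :
    rho hu a ∈ Sub p k := by
  rw [mem_iff_dist_one]
  have key : ∀ m : ℕ, ‖((sq u a m : ℤ_[p]ˣ) : ℤ_[p]) - 1‖ ≤ (p : ℝ) ^ (-k : ℤ) := fun m =>
    mem_iff_dist_one.mp (Subgroup.zpow_mem _ huk _)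
  have htend : Tendsto (fun m => ‖((sq u a m : ℤ_[p]ˣ) : ℤ_[p]) - 1‖)
      atTop (nhds ‖rhoVal u a - 1‖) :=
    ((tendsto_rhoVal hu a).sub tendsto_const_nhds).norm
  exact le_of_tendsto htend (Filter.Eventually.of_forall key)

lemma rho_sub_mem {u : ℤ_[p]ˣ} (hu : u ∈ Sub p 1) {a b : ℤ_[p]} {n : ℕ}
    (h : (p : ℤ_[p]) ^ n ∣ a - b) : rho hu a * (rho hu b)⁻¹ ∈ Sub p n := by
  have h1 : rho hu b * rho hu (a - b) = rho hu a := by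
    rw [← rho_add]; congr 1; ring
  have h2 : rho hu (a - b) * ((u ^ (0:ℤ))⁻¹) ∈ Sub p (n+1) := by
    apply rho_dist
    simpa using h
  have h3 : rho hu a * (rho hu b)⁻¹ = rho hu (a - b) * (u ^ (0:ℤ))⁻¹ := by
    rw [← h1, zpow_zero, inv_one, mul_one, mul_inv_cancel_comm]
  rw [h3]
  exact Sub_anti (Nat.le_succ n) h2

lemma norm_rhoVal_sub {u : ℤ_[p]ˣ} (hu : u ∈ Sub p 1) {a b : ℤ_[p]} {n : ℕ}
    (h : ‖a - b‖ ≤ (p:ℝ) ^ (-n : ℤ)) : ‖rhoVal u a - rhoVal u b‖ ≤ (p:ℝ) ^ (-n : ℤ) := by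
  have h' : (p : ℤ_[p]) ^ n ∣ a - b := (dvd_iff_norm n _).mpr h
  have := mem_iff_dist.mp (rho_sub_mem hu h')
  exact this

lemma continuous_rhoVal {u : ℤ_[p]ˣ} (hu : u ∈ Sub p 1) : Continuous (rhoVal u) := by
  have hp0 : (0:ℝ) < p := by exact_mod_cast hp.out.pos
  rw [Metric.continuous_iff]
  intro a ε hε
  obtain ⟨N, hN⟩ : ∃ N : ℕ, (p:ℝ) ^ (-(N:ℤ)) < ε := by
    have := tendsto_pow_neg (p := p)
    rw [Metric.tendsto_atTop] at this
    obtain ⟨N, hN⟩ := this ε hε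
    refine ⟨N + 1, ?_⟩
    have := hN N (le_refl N)
    rw [Real.dist_eq, sub_zero, abs_of_pos (zpow_pos hp0 _)] at this
    have e : (-(↑(N+1):ℤ)) = -((N:ℤ) + 1) := by push_cast; ring
    rw [e]
    exact this
  refine ⟨(p:ℝ) ^ (-(N:ℤ)), zpow_pos hp0 _, ?_⟩
  intro b hb
  rw [dist_eq_norm] at hb ⊢
  calc ‖rhoVal u b - rhoVal u a‖ ≤ (p:ℝ) ^ (-(N:ℤ)) := norm_rhoVal_sub hu hb.le
    _ < ε := hN

lemma rho_continuous {u : ℤ_[p]ˣ} (hu : u ∈ Sub p 1) : Continuous (rho hu) := by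
  rw [Units.continuous_iff]
  constructor
  · exact continuous_rhoVal hu
  · have hinv : ∀ a, (((rho hu a)⁻¹ : ℤ_[p]ˣ) : ℤ_[p]) = rhoVal u⁻¹ a := fun a => rfl
    simp only [hinv]
    exact continuous_rhoVal ((Sub p 1).inv_mem hu)

lemma rho_zsmul {u : ℤ_[p]ˣ} (hu : u ∈ Sub p 1) (z : ℤ) (a : ℤ_[p]) :
    rho hu ((z : ℤ_[p]) * a) = (rho hu a) ^ z := by
  have key := (AddMonoidHom.mk' (fun a => Additive.ofMul (rho hu a)) (rho_add hu)).map_zsmul z a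
  have e1 : z • a = (z : ℤ_[p]) * a := by rw [zsmul_eq_mul]
  rw [e1] at key
  exact key

/-- Membership in `Sub p n` via the reduction map. -/
lemma mem_Sub_iff_map {n : ℕ} {x : ℤ_[p]ˣ} :
    x ∈ Sub p n ↔
      Units.map ((PadicInt.toZModPow n : ℤ_[p] →+* ZMod (p ^ n)) : ℤ_[p] →* ZMod (p ^ n)) x = 1 := by
  rw [mem_Sub_iff]
  constructor
  · intro h
    ext
    have h2 : (x : ℤ_[p]) - 1 ∈ RingHom.ker (toZModPow n (p := p)) := by
      rw [ker_toZModPow, Ideal.mem_span_singleton]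
      exact h
    rw [RingHom.mem_ker, map_sub, map_one, sub_eq_zero] at h2
    simpa using h2
  · intro h
    have h2 : (toZModPow n (p := p)) (x : ℤ_[p]) = 1 := by
      have := congrArg Units.val h
      simpa using this
    have h3 : (x : ℤ_[p]) - 1 ∈ RingHom.ker (toZModPow n (p := p)) := by
      rw [RingHom.mem_ker, map_sub, map_one, sub_eq_zero, h2]
    rw [ker_toZModPow, Ideal.mem_span_singleton] at h3
    exact h3

lemma mem_U1_iff {x : ℤ_[p]ˣ} : x ∈ U1 p ↔ x ∈ Sub p (if p = 2 then 2 else 1) := by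
  rw [U1, MonoidHom.mem_ker, mem_Sub_iff_map]

lemma one_le_k : 1 ≤ (if p = 2 then 2 else 1) := by split <;> norm_num

lemma isUnit_one_add_pow {m : ℕ} (hm : 1 ≤ m) : IsUnit (1 + (p:ℤ_[p])^m) := by
  have hp1 : (1 : ℝ) < p := by exact_mod_cast hp.out.one_lt
  have hlt : ‖(p:ℤ_[p])^m‖ < 1 := by
    rw [norm_p_pow]
    calc (p:ℝ) ^ (-(m:ℤ)) ≤ (p:ℝ) ^ (-1 : ℤ) := by
          apply zpow_le_zpow_right₀ (le_of_lt hp1); omega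
      _ < 1 := by
          rw [zpow_neg_one, inv_lt_one_iff₀]; right; exact hp1
  rw [PadicInt.isUnit_iff]
  apply le_antisymm (PadicInt.norm_le_one _)
  by_contra hc
  push_neg at hc
  have h1 : ‖(1 : ℤ_[p])‖ ≤ max ‖1 + (p:ℤ_[p])^m‖ ‖-((p:ℤ_[p])^m)‖ := by
    have := PadicInt.nonarchimedean (1 + (p:ℤ_[p])^m) (-((p:ℤ_[p])^m))
    simpa using this
  rw [norm_one, norm_neg] at h1
  have := max_lt hc hlt
  linarith [le_trans h1 (le_of_lt this)]

lemma norm_one_add_pow {m : ℕ} (hm : 1 ≤ m) :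
    (((isUnit_one_add_pow (p := p) hm).unit : ℤ_[p]ˣ) : ℤ_[p]) = 1 + (p:ℤ_[p])^m :=
  (isUnit_one_add_pow hm).unit_spec

lemma Efam_injective {k0 : ℕ} (hk0 : 1 ≤ k0) : Function.Injective
    (fun j : ℕ => (isUnit_one_add_pow (p := p) (le_trans hk0 (Nat.le_add_right k0 j))).unit) := by
  intro i j hij
  have h1 := congrArg (fun u : ℤ_[p]ˣ => ((u : ℤ_[p]ˣ) : ℤ_[p])) hij
  simp only [norm_one_add_pow] at h1
  have h2 : (p:ℤ_[p])^(k0+i) = (p:ℤ_[p])^(k0+j) := add_left_cancel h1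
  have h3 := congrArg (fun z : ℤ_[p] => ‖z‖) h2
  simp only [norm_p_pow] at h3
  have hp1 : (1 : ℝ) < p := by exact_mod_cast hp.out.one_lt
  have h4 := (zpow_right_strictMono₀ hp1).injective h3
  omega

lemma r_mem_k (r : U1 p) : (r : ℤ_[p]ˣ) ∈ Sub p (if p = 2 then 2 else 1) :=
  mem_U1_iff.mp r.2

lemma r_mem1 (r : U1 p) : (r : ℤ_[p]ˣ) ∈ Sub p 1 :=
  Sub_anti one_le_k (r_mem_k r)

/-- The map `a ↦ r ^ a`. -/
noncomputable def rhoR (r : U1 p) : ℤ_[p] → ℤ_[p]ˣ := rho (r_mem1 r)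

lemma rhoR_mem_U1 (r : U1 p) (a : ℤ_[p]) : rhoR r a ∈ U1 p :=
  mem_U1_iff.mpr (rho_mem (r_mem1 r) (r_mem_k r) a)

lemma rhoR_surj {r : U1 p} (hr : Dense (Subgroup.zpowers r : Set (U1 p)))
    (x : ℤ_[p]ˣ) (hx : x ∈ U1 p) : ∃ a, rhoR r a = x := by
  have hcomp : IsCompact (Set.range (rhoR r)) := isCompact_range (rho_continuous _)
  have hclosed : IsClosed (Set.range (rhoR r)) := hcomp.isClosed
  have hdense : (⟨x, hx⟩ : U1 p) ∈ closure (Subgroup.zpowers r : Set (U1 p)) := hr _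
  have hmap : Set.MapsTo (fun y : U1 p => (y : ℤ_[p]ˣ)) (Subgroup.zpowers r)
      (Set.range (rhoR r)) := by
    rintro y ⟨z, rfl⟩
    refine ⟨((z : ℤ) : ℤ_[p]), ?_⟩
    rw [rhoR, rho_int]
    push_cast
    rfl
  have hmem := map_mem_closure continuous_subtype_val hdense hmap
  rw [hclosed.closure_eq] at hmem
  exact hmem

lemma rhoR_inj {r : U1 p} (hr : Dense (Subgroup.zpowers r : Set (U1 p))) :
    Function.Injective (rhoR r) := by
  intro a b hab
  by_contra hne
  have hc0 : a - b ≠ 0 := sub_ne_zero.mpr hne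
  have hrc : rhoR r (a - b) = 1 := by
    have h1 : rhoR r (b + (a - b)) = rhoR r b * rhoR r (a - b) := rho_add _ _ _
    rw [show b + (a - b) = a by ring, hab] at h1
    have h2 : rhoR r b * 1 = rhoR r b * rhoR r (a - b) := by rw [mul_one]; exact h1
    exact (mul_left_cancel h2).symm
  have hker : ∀ t : ℤ_[p], rhoR r ((a - b) * t) = 1 := by
    have hcont1 : Continuous (fun t : ℤ_[p] => rhoR r ((a - b) * t)) :=
      (rho_continuous _).comp (continuous_const.mul continuous_id)
    have heq : Set.EqOn (fun t => rhoR r ((a - b) * t)) (fun _ => 1)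
        (Set.range (Int.cast : ℤ → ℤ_[p])) := by
      rintro _ ⟨z, rfl⟩
      show rhoR r ((a - b) * (z : ℤ_[p])) = 1
      rw [mul_comm, rhoR, rho_zsmul, ← rhoR]
      rw [hrc, one_zpow]
    have := Continuous.ext_on (PadicInt.denseRange_intCast) hcont1 continuous_const heq
    intro t
    exact congrFun this t
  set m := (a - b).valuation with hm
  have hvspec := PadicInt.unitCoeff_spec hc0
  have hpm : ∀ t : ℤ_[p], rhoR r ((p:ℤ_[p])^m * t) = 1 := by
    intro t
    have hv : (((PadicInt.unitCoeff hc0)⁻¹ : ℤ_[p]ˣ) : ℤ_[p]) * (a - b) = (p:ℤ_[p])^m := by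
      have h := congrArg
        (fun z : ℤ_[p] => (((PadicInt.unitCoeff hc0)⁻¹ : ℤ_[p]ˣ) : ℤ_[p]) * z) hvspec
      rw [← mul_assoc, ← Units.val_mul, inv_mul_cancel, Units.val_one, one_mul] at h
      exact h
    have : (p:ℤ_[p])^m * t = (a - b) * ((((PadicInt.unitCoeff hc0)⁻¹ : ℤ_[p]ˣ) : ℤ_[p]) * t) := by
      rw [← hv]; ring
    rw [this]
    exact hker _
  have hfin : (Set.range (rhoR r)).Finite := by
    have hsub : Set.range (rhoR r) ⊆ (fun i : ℕ => rhoR r i) '' (Set.Iio (p^m)) := by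
      rintro _ ⟨c, rfl⟩
      refine ⟨c.appr m, c.appr_lt m, ?_⟩
      obtain ⟨t, ht⟩ := Ideal.mem_span_singleton.mp (appr_spec m c)
      show rhoR r (c.appr m : ℤ_[p]) = rhoR r c
      have hc : ((c.appr m : ℕ) : ℤ_[p]) + (p:ℤ_[p])^m * t = c := by rw [← ht]; ring
      calc rhoR r (c.appr m : ℤ_[p])
          = rhoR r (c.appr m : ℤ_[p]) * rhoR r ((p:ℤ_[p])^m * t) := by rw [hpm, mul_one]
        _ = rhoR r (((c.appr m : ℕ) : ℤ_[p]) + (p:ℤ_[p])^m * t) := (rho_add _ _ _).symm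
        _ = rhoR r c := by rw [hc]
    exact ((Set.finite_Iio _).image _).subset hsub
  have hinf : (Set.range (rhoR r)).Infinite := by
    apply Set.infinite_of_injective_forall_mem (Efam_injective (p := p) (one_le_k (p := p)))
    intro j
    have h1j : 1 ≤ (if p = 2 then 2 else 1) + j :=
      le_trans (one_le_k (p := p)) (Nat.le_add_right _ j)
    have hmem : ((isUnit_one_add_pow (p := p) h1j).unit : ℤ_[p]ˣ) ∈ U1 p := by
      rw [mem_U1_iff, mem_Sub_iff]
      rw [norm_one_add_pow h1j]
      have : (1 : ℤ_[p]) + (p:ℤ_[p])^((if p = 2 then 2 else 1) + j) - 1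
          = (p:ℤ_[p])^((if p = 2 then 2 else 1) + j) := by ring
      rw [this]
      exact pow_dvd_pow _ (Nat.le_add_right _ j)
    obtain ⟨c, hc⟩ := rhoR_surj hr _ hmem
    exact ⟨c, hc⟩
  exact hinf hfin

variable {r : U1 p}

/-- The equivalence `ℤ_[p] ≃ U1 p` given by `a ↦ r ^ a`. -/
noncomputable def eqv (hr : Dense (Subgroup.zpowers r : Set (U1 p))) : ℤ_[p] ≃ U1 p :=
  Equiv.ofBijective (fun a => ⟨rhoR r a, rhoR_mem_U1 r a⟩)
    ⟨fun a b h => rhoR_inj hr (congrArg Subtype.val h),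
     fun x => by obtain ⟨a, ha⟩ := rhoR_surj hr x.1 x.2; exact ⟨a, Subtype.ext ha⟩⟩

lemma eqv_continuous (hr : Dense (Subgroup.zpowers r : Set (U1 p))) :
    Continuous (eqv hr) := (rho_continuous _).subtype_mk _

/-- The inverse map, the `r`-logarithm on `U1`. -/
noncomputable def phi0 (hr : Dense (Subgroup.zpowers r : Set (U1 p))) : U1 p → ℤ_[p] :=
  (eqv hr).symm

lemma phi0_continuous (hr : Dense (Subgroup.zpowers r : Set (U1 p))) :
    Continuous (phi0 hr) :=
  (Continuous.homeoOfEquivCompactToT2 (f := eqv hr) (eqv_continuous hr)).symm.continuous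

lemma rhoR_phi0 (hr : Dense (Subgroup.zpowers r : Set (U1 p))) (x : U1 p) :
    rhoR r (phi0 hr x) = (x : ℤ_[p]ˣ) :=
  congrArg Subtype.val ((eqv hr).apply_symm_apply x)

lemma phi0_add (hr : Dense (Subgroup.zpowers r : Set (U1 p))) (x y : U1 p) :
    phi0 hr (x * y) = phi0 hr x + phi0 hr y := by
  apply rhoR_inj hr
  have h0 : rhoR r (phi0 hr x + phi0 hr y) = rhoR r (phi0 hr x) * rhoR r (phi0 hr y) :=
    rho_add (r_mem1 r) _ _
  have h1 : rhoR r (phi0 hr x + phi0 hr y) = ((x * y : U1 p) : ℤ_[p]ˣ) := by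
    rw [h0, rhoR_phi0, rhoR_phi0]
    rfl
  rw [h1, rhoR_phi0]

lemma rhoR_one' : rhoR r (1 : ℤ_[p]) = (r : ℤ_[p]ˣ) := by
  have := rho_int (r_mem1 r) 1
  simpa [rhoR] using this

lemma phi0_r (hr : Dense (Subgroup.zpowers r : Set (U1 p))) : phi0 hr r = 1 := by
  have h1 : eqv hr 1 = r := Subtype.ext rhoR_one'
  show (eqv hr).symm r = 1
  exact (Equiv.symm_apply_eq _).mpr h1.symm

lemma phi0_one (hr : Dense (Subgroup.zpowers r : Set (U1 p))) : phi0 hr 1 = 0 := by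
  have h := phi0_add hr 1 1
  rw [mul_one] at h
  exact (left_eq_add.mp h)

lemma phi0_pow (hr : Dense (Subgroup.zpowers r : Set (U1 p))) (x : U1 p) (n : ℕ) :
    phi0 hr (x ^ n) = (n : ℤ_[p]) * phi0 hr x := by
  induction n with
  | zero => simp [phi0_one hr]
  | succ n ih =>
    rw [pow_succ, phi0_add hr, ih]
    push_cast
    ring

/-- Any continuous homomorphism is determined on `U1` by its value at `r`. -/
lemma hom_on_U1 (hr : Dense (Subgroup.zpowers r : Set (U1 p))) {ψ : ℤ_[p]ˣ → ℤ_[p]}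
    (hc : Continuous ψ) (hadd : ∀ x y, ψ (x * y) = ψ x + ψ y) (x : U1 p) :
    ψ (x : ℤ_[p]ˣ) = ψ (r : ℤ_[p]ˣ) * phi0 hr x := by
  have gadd : ∀ s t : ℤ_[p], ψ (rhoR r (s + t)) = ψ (rhoR r s) + ψ (rhoR r t) := by
    intro s t
    rw [rhoR, rho_add (r_mem1 r) s t]
    exact hadd _ _
  have hzs : ∀ z : ℤ, ψ (rhoR r ((z : ℤ) : ℤ_[p])) = ((z : ℤ) : ℤ_[p]) * ψ (rhoR r 1) := by
    intro z
    have h1 := (AddMonoidHom.mk' (fun t => ψ (rhoR r t)) gadd).map_zsmul z 1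
    have e : (z • (1:ℤ_[p])) = ((z : ℤ) : ℤ_[p]) := by simp
    rw [e] at h1
    simpa [zsmul_eq_mul] using h1
  have heq : (fun t => ψ (rhoR r t)) = fun t => t * ψ (rhoR r 1) := by
    apply Continuous.ext_on PadicInt.denseRange_intCast (hc.comp (rho_continuous _))
      (continuous_id.mul continuous_const)
    rintro _ ⟨z, rfl⟩
    exact hzs z
  have h2 := congrFun heq (phi0 hr x)
  simp only [rhoR_phi0 hr x, rhoR_one'] at h2
  rw [h2]
  ring

lemma pow_card_mem_U1 (x : ℤ_[p]ˣ) :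
    x ^ (Nat.card (ZMod (p ^ (if p = 2 then 2 else 1)))ˣ) ∈ U1 p := by
  rw [U1, MonoidHom.mem_ker, map_pow]
  exact pow_card_eq_one'

lemma card_ne_zero : (Nat.card (ZMod (p ^ (if p = 2 then 2 else 1)))ˣ) ≠ 0 := by
  haveI : NeZero (p ^ (if p = 2 then 2 else 1)) := ⟨pow_ne_zero _ hp.out.pos.ne'⟩
  exact Nat.card_pos.ne'

lemma raw_pow {ψ : ℤ_[p]ˣ → ℤ_[p]} (hadd : ∀ x y, ψ (x * y) = ψ x + ψ y)
    (x : ℤ_[p]ˣ) (n : ℕ) : ψ (x ^ n) = (n : ℤ_[p]) * ψ x := by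
  have h1 : ψ 1 = 0 := by
    have h := hadd 1 1
    rw [mul_one] at h
    exact (left_eq_add.mp h)
  induction n with
  | zero => simp [h1]
  | succ n ih =>
    rw [pow_succ, hadd, ih]
    push_cast
    ring

/-- The classification: every continuous hom is `ψ (r) • φ`. -/
lemma classify (hr : Dense (Subgroup.zpowers r : Set (U1 p)))
    {φ ψ : ℤ_[p]ˣ → ℤ_[p]} (hφc : Continuous φ) (hφa : ∀ x y, φ (x * y) = φ x + φ y)
    (hφr : φ (r : ℤ_[p]ˣ) = 1) (hψc : Continuous ψ) (hψa : ∀ x y, ψ (x * y) = ψ x + ψ y)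
    (x : ℤ_[p]ˣ) : ψ x = ψ (r : ℤ_[p]ˣ) * φ x := by
  set N := Nat.card (ZMod (p ^ (if p = 2 then 2 else 1)))ˣ with hN
  have hxN : x ^ N ∈ U1 p := pow_card_mem_U1 x
  have hψ1 : ψ (x ^ N) = ψ (r : ℤ_[p]ˣ) * phi0 hr ⟨x ^ N, hxN⟩ :=
    hom_on_U1 hr hψc hψa ⟨x ^ N, hxN⟩
  have hφ1 : φ (x ^ N) = phi0 hr ⟨x ^ N, hxN⟩ := by
    have := hom_on_U1 hr hφc hφa ⟨x ^ N, hxN⟩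
    rwa [hφr, one_mul] at this
  have key : (N : ℤ_[p]) * ψ x = (N : ℤ_[p]) * (ψ (r : ℤ_[p]ˣ) * φ x) := by
    rw [← raw_pow hψa x N, hψ1, ← hφ1, raw_pow hφa x N]
    ring
  have hNne : (N : ℤ_[p]) ≠ 0 := by
    exact_mod_cast Nat.cast_ne_zero.mpr (card_ne_zero (p := p))
  exact mul_left_cancel₀ hNne key

lemma cont_of_clopen {X Y : Type*} [TopologicalSpace X] [TopologicalSpace Y] {S : Set X}
    (hS : IsClopen S) {f : X → Y} (hf : ContinuousOn f S) (hg : ContinuousOn f Sᶜ) :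
    Continuous f := by
  rw [continuous_iff_continuousAt]
  intro x
  by_cases hx : x ∈ S
  · exact hf.continuousAt (hS.isOpen.mem_nhds hx)
  · exact hg.continuousAt (hS.compl.isOpen.mem_nhds hx)

lemma map_neg_unit {R S : Type*} [Ring R] [Ring S] (F : R →+* S) (x : Rˣ) :
    Units.map (F : R →* S) (-x) = -(Units.map (F : R →* S) x) := by
  ext
  simp

lemma two_neg_mem {x : ℤ_[2]ˣ} (h : x ∉ Sub 2 2) : -x ∈ Sub 2 2 := by
  rw [mem_Sub_iff_map] at h ⊢
  rw [map_neg_unit]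
  have hv : ∀ v : (ZMod (2^2))ˣ, v ≠ 1 → -v = 1 := by decide
  exact hv _ h

lemma two_mul_mem {x y : ℤ_[2]ˣ} (hx : x ∉ Sub 2 2) (hy : y ∉ Sub 2 2) : x * y ∈ Sub 2 2 := by
  rw [mem_Sub_iff_map] at hx hy ⊢
  rw [map_mul]
  have hv : ∀ v w : (ZMod (2^2))ˣ, v ≠ 1 → w ≠ 1 → v * w = 1 := by decide
  exact hv _ _ hx hy

lemma two_clopen : IsClopen {x : ℤ_[2]ˣ | x ∈ Sub 2 2} := by
  have hset : {x : ℤ_[2]ˣ | x ∈ Sub 2 2}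
      = (fun x : ℤ_[2]ˣ => ((x : ℤ_[2]) - 1)) ⁻¹' {z : ℤ_[2] | ‖z‖ ≤ ((2:ℕ):ℝ) ^ (-(2:ℕ) : ℤ)} := by
    ext x
    exact mem_iff_dist_one
  constructor
  · rw [hset]
    exact (isClosed_le continuous_norm continuous_const).preimage
      (Units.continuous_val.sub continuous_const)
  · rw [hset]
    have hopen : {z : ℤ_[2] | ‖z‖ ≤ ((2:ℕ):ℝ) ^ (-(2:ℕ) : ℤ)}
        = {z : ℤ_[2] | ‖z‖ < ((2:ℕ):ℝ) ^ (-1 : ℤ)} := by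
      ext z
      rw [Set.mem_setOf_eq, Set.mem_setOf_eq, PadicInt.norm_le_pow_iff_norm_lt_pow_add_one]
      norm_num
    rw [hopen]
    exact (isOpen_lt continuous_norm continuous_const).preimage
      (Units.continuous_val.sub continuous_const)

end Stmt9Aux

open Stmt9Aux

/-- For a topological generator `r` of `U₁ ⊆ ℤ_pˣ`, there is a unique continuous group
homomorphism `φ_r : ℤ_pˣ → (ℤ_p, +)` with `φ_r r = 1`, and every continuous group
homomorphism `ψ : ℤ_pˣ → (ℤ_p, +)` equals `a • φ_r` for a unique `a ∈ ℤ_p`; i.e. the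
group of such homomorphisms is a free `ℤ_p`-module of rank one generated by `φ_r`. -/
theorem stmt9 (p : ℕ) [Fact p.Prime] (r : U1 p)
    (hr : Dense (Subgroup.zpowers r : Set (U1 p))) :
    ∃ φ : ℤ_[p]ˣ → ℤ_[p],
      (Continuous φ ∧ (∀ x y : ℤ_[p]ˣ, φ (x * y) = φ x + φ y) ∧ φ (r : ℤ_[p]ˣ) = 1) ∧
      (∀ φ' : ℤ_[p]ˣ → ℤ_[p], Continuous φ' → (∀ x y : ℤ_[p]ˣ, φ' (x * y) = φ' x + φ' y) →
        φ' (r : ℤ_[p]ˣ) = 1 → φ' = φ) ∧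
      (∀ ψ : ℤ_[p]ˣ → ℤ_[p], Continuous ψ → (∀ x y : ℤ_[p]ˣ, ψ (x * y) = ψ x + ψ y) →
        ∃! a : ℤ_[p], ψ = fun x => a * φ x) := by

  classical
  obtain ⟨φ, hφc, hφa, hφr⟩ : ∃ φ : ℤ_[p]ˣ → ℤ_[p],
      Continuous φ ∧ (∀ x y : ℤ_[p]ˣ, φ (x * y) = φ x + φ y) ∧ φ (r : ℤ_[p]ˣ) = 1 := by
    by_cases hp2 : p = 2
    · subst hp2
      have e2 : (if 2 = 2 then 2 else 1) = 2 := if_pos rfl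
      have m2 : ∀ {x : ℤ_[2]ˣ}, x ∈ Sub 2 2 → x ∈ U1 2 := by
        intro x h
        rw [mem_U1_iff, e2]
        exact h
      refine ⟨fun x => if h : x ∈ Sub 2 2 then phi0 hr ⟨x, m2 h⟩
        else phi0 hr ⟨-x, m2 (two_neg_mem h)⟩, ?_, ?_, ?_⟩
      · apply cont_of_clopen two_clopen
        · rw [continuousOn_iff_continuous_restrict]
          have hres : Set.domRestrict {x : ℤ_[2]ˣ | x ∈ Sub 2 2}
              (fun x => if h : x ∈ Sub 2 2 then phi0 hr ⟨x, m2 h⟩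
                else phi0 hr ⟨-x, m2 (two_neg_mem h)⟩)
              = fun y => phi0 hr ⟨y.1, m2 y.2⟩ := by
            funext y
            simp only [Set.domRestrict_apply]
            rw [dif_pos (show (y.1 : ℤ_[2]ˣ) ∈ Sub 2 2 from y.2)]
          rw [hres]
          exact (phi0_continuous hr).comp (Continuous.subtype_mk continuous_subtype_val _)
        · rw [continuousOn_iff_continuous_restrict]
          have hres : Set.domRestrict {x : ℤ_[2]ˣ | x ∈ Sub 2 2}ᶜ
              (fun x => if h : x ∈ Sub 2 2 then phi0 hr ⟨x, m2 h⟩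
                else phi0 hr ⟨-x, m2 (two_neg_mem h)⟩)
              = fun y => phi0 hr ⟨-y.1, m2 (two_neg_mem y.2)⟩ := by
            funext y
            simp only [Set.domRestrict_apply]
            rw [dif_neg (show ¬ (y.1 : ℤ_[2]ˣ) ∈ Sub 2 2 from y.2)]
          rw [hres]
          apply (phi0_continuous hr).comp
          apply Continuous.subtype_mk
          have hneg : (fun (y : ({x : ℤ_[2]ˣ | x ∈ Sub 2 2}ᶜ : Set ℤ_[2]ˣ)) => -(y.1 : ℤ_[2]ˣ))
              = fun y => (-1 : ℤ_[2]ˣ) * y.1 := by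
            funext y
            rw [neg_one_mul]
          rw [hneg]
          exact continuous_const.mul continuous_subtype_val
      · intro x y
        by_cases hx : x ∈ Sub 2 2 <;> by_cases hy : y ∈ Sub 2 2
        · have hxy : x * y ∈ Sub 2 2 := (Sub 2 2).mul_mem hx hy
          simp only [dif_pos hxy, dif_pos hx, dif_pos hy, ← phi0_add hr]
          congr 1
        · have hxy : x * y ∉ Sub 2 2 := by
            intro hmem
            have := (Sub 2 2).mul_mem ((Sub 2 2).inv_mem hx) hmem
            rw [inv_mul_cancel_left] at this
            exact hy this
          simp only [dif_neg hxy, dif_pos hx, dif_neg hy, ← phi0_add hr]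
          congr 1
          exact Subtype.ext (mul_neg x y).symm
        · have hxy : x * y ∉ Sub 2 2 := by
            intro hmem
            have := (Sub 2 2).mul_mem hmem ((Sub 2 2).inv_mem hy)
            rw [mul_inv_cancel_right] at this
            exact hx this
          simp only [dif_neg hxy, dif_pos hy, dif_neg hx, ← phi0_add hr]
          congr 1
          exact Subtype.ext (neg_mul x y).symm
        · have hxy : x * y ∈ Sub 2 2 := two_mul_mem hx hy
          simp only [dif_pos hxy, dif_neg hx, dif_neg hy, ← phi0_add hr]
          congr 1
          exact Subtype.ext (neg_mul_neg x y).symm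
      · have hrS : (r : ℤ_[2]ˣ) ∈ Sub 2 2 := by
          have := mem_U1_iff.mp r.2
          rwa [e2] at this
        have hsub : (⟨(r : ℤ_[2]ˣ), m2 hrS⟩ : U1 2) = r := Subtype.ext rfl
        simp only [dif_pos hrS, hsub, phi0_r hr]
    · set N := Nat.card (ZMod (p ^ (if p = 2 then 2 else 1)))ˣ with hN
      have hNcard : N = p - 1 := by
        have e : p ^ (if p = 2 then 2 else 1) = p := by rw [if_neg hp2, pow_one]
        rw [hN, e, Nat.card_eq_fintype_card, ZMod.card_units]
      have hNne : N ≠ 0 := card_ne_zero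
      have hNunit : IsUnit ((N : ℕ) : ℤ_[p]) := by
        rw [PadicInt.isUnit_iff]
        apply le_antisymm (PadicInt.norm_le_one _)
        by_contra hc
        push_neg at hc
        rw [PadicInt.norm_lt_one_iff_dvd] at hc
        have h2 : (p:ℤ_[p])^1 ∣ ((N : ℤ) : ℤ_[p]) := by
          rw [pow_one]
          exact_mod_cast hc
        rw [PadicInt.pow_p_dvd_int_iff] at h2
        have h3 : (p : ℕ) ∣ N := by
          have := Int.natCast_dvd_natCast.mp (by simpa using h2)
          exact this
        have h4 : N < p := by
          rw [hNcard]
          have := (Fact.out : p.Prime).two_le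
          omega
        exact hNne (Nat.eq_zero_of_dvd_of_lt h3 h4)
      refine ⟨fun x => ((hNunit.unit⁻¹ : ℤ_[p]ˣ) : ℤ_[p]) * phi0 hr ⟨x ^ N, pow_card_mem_U1 x⟩,
        ?_, ?_, ?_⟩
      · exact continuous_const.mul ((phi0_continuous hr).comp
          (Continuous.subtype_mk (continuous_pow N) _))
      · intro x y
        have hsub : (⟨(x * y) ^ N, pow_card_mem_U1 (x * y)⟩ : U1 p)
            = ⟨x ^ N, pow_card_mem_U1 x⟩ * ⟨y ^ N, pow_card_mem_U1 y⟩ :=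
          Subtype.ext (mul_pow x y N)
        simp only [hsub, phi0_add hr]
        ring
      · have hsub : (⟨(r : ℤ_[p]ˣ) ^ N, pow_card_mem_U1 _⟩ : U1 p) = r ^ N := by
          apply Subtype.ext
          rw [SubgroupClass.coe_pow]
        simp only [hsub, phi0_pow hr, phi0_r hr, mul_one]
        calc ((hNunit.unit⁻¹ : ℤ_[p]ˣ) : ℤ_[p]) * ((N : ℕ) : ℤ_[p])
            = ((hNunit.unit⁻¹ : ℤ_[p]ˣ) : ℤ_[p]) * ((hNunit.unit : ℤ_[p]ˣ) : ℤ_[p]) := by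
              rw [hNunit.unit_spec]
          _ = 1 := Units.inv_mul _
  refine ⟨φ, ⟨hφc, hφa, hφr⟩, ?_, ?_⟩
  · intro φ' hc' ha' hr'
    funext x
    have := classify hr hφc hφa hφr hc' ha' x
    rw [this, hr', one_mul]
  · intro ψ hc ha
    refine ⟨ψ (r : ℤ_[p]ˣ), ?_, ?_⟩
    · funext x
      exact classify hr hφc hφa hφr hc ha x
    · intro a hae
      have h := congrFun hae (r : ℤ_[p]ˣ)
      rw [hφr] at h
      rw [h, mul_one]
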